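/- Let S = (β, γ) be a standard symbol. Then the recursive construction of ψ succeeds: the sets γ^l (l ≥ 0) are pairwise disjoint and their union is all of γ, the resulting map ψ : γ → β is a well-defined injection into β, and ψ(j) ≤ j for every j ∈ γ. -/

import Mathlib

namespace LM2003

open scoped BigOperators

/-- `(β, γ)` is a symbol in `Sy(n,k,r)`: two finite sets of integers contained in
`{1, …, n+1}`, of cardinalities `k+r` and `k` (rows are identified with the subsets
they enumerate; strict increase is automatic). -/
def IsSymbol (n k r : ℕ) (β γ : Finset ℤ) : Prop :=
  β ⊆ Finset.Icc 1 ((n : ℤ) + 1) ∧ γ ⊆ Finset.Icc 1 ((n : ℤ) + 1) ∧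
    β.card = k + r ∧ γ.card = k

/-- `(β,γ)` is standard: for each `i < |γ|`, the `i`-th smallest element of `β`
is `≤` the `i`-th smallest element of `γ`. -/
def IsStandard (β γ : Finset ℤ) : Prop :=
  ∀ i : ℕ, i < γ.card → (β.sort (· ≤ ·))[i]! ≤ (γ.sort (· ≤ ·))[i]!

/-- Accumulated data after level `l` of the recursive definition of `ψ`:
the first component is `γ⁰ ∪ ⋯ ∪ γ^l` and the second is `ψ(γ⁰ ∪ ⋯ ∪ γ^l)`. -/
def psiAcc (β γ : Finset ℤ) : ℕ → Finset ℤ × Finset ℤ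
  | 0 => (γ ∩ β, γ ∩ β)
  | l + 1 =>
    let p := psiAcc β γ l
    let g := (γ \ p.1).filter fun j => j - ((l : ℤ) + 1) ∈ β \ p.2
    (p.1 ∪ g, p.2 ∪ g.image fun j => j - ((l : ℤ) + 1))

/-- The level sets `γ^l` in the recursive definition of `ψ`. -/
def gammaL (β γ : Finset ℤ) : ℕ → Finset ℤ
  | 0 => γ ∩ β
  | l + 1 =>
    (γ \ (psiAcc β γ l).1).filter fun j => j - ((l : ℤ) + 1) ∈ β \ (psiAcc β γ l).2

open Classical in
/-- The map `ψ` : for `j ∈ γ^l` it is `j ↦ j - l` (via the least such `l`),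
and the identity elsewhere. -/
noncomputable def psiS (β γ : Finset ℤ) (j : ℤ) : ℤ :=
  if h : ∃ l, j ∈ gammaL β γ l then j - (Nat.find h : ℤ) else j

/-- The pairs of a (standard) symbol: the pairs `(j, ψ(j))` with `j ∈ γ` and `ψ(j) ≠ j`. -/
noncomputable def pairsS (β γ : Finset ℤ) : Finset (ℤ × ℤ) :=
  (γ.filter fun j => psiS β γ j ≠ j).image fun j => (j, psiS β γ j)

/-- Exchanging, for every pair in `T`, the two members between the two rows of `(β,γ)`
(reordering of rows is automatic for sets). Pairs are written `(j, ψ j)` with `j` in the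
bottom row `γ` and `ψ j` in the top row `β`. -/
def swapSymbol (β γ : Finset ℤ) (T : Finset (ℤ × ℤ)) : Finset ℤ × Finset ℤ :=
  ((β \ T.image Prod.snd) ∪ T.image Prod.fst,
   (γ \ T.image Prod.fst) ∪ T.image Prod.snd)

/-- The class `C(S)` of a standard symbol: all symbols obtained by permuting a subset
of its pairs. -/
noncomputable def CSet (β γ : Finset ℤ) : Finset (Finset ℤ × Finset ℤ) :=
  (pairsS β γ).powerset.image (swapSymbol β γ)

/-- The Fock space `F(Λ)`: free `ℚ(v)`-module on the set of all symbols. -/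
abbrev FF : Type := (Finset ℤ × Finset ℤ) →₀ RatFunc ℚ

/-- Standard basis vector `u_S`. -/
noncomputable def uS (S : Finset ℤ × Finset ℤ) : FF := Finsupp.single S 1

/-- The variable `v` of `K = ℚ(v)`. -/
noncomputable def vv : RatFunc ℚ := RatFunc.X

/-- Action of the Chevalley generator `f_j` on the standard basis vector `u_S`. -/
noncomputable def fAct (j : ℤ) (S : Finset ℤ × Finset ℤ) : FF :=
  (if j ∈ S.2 ∧ j + 1 ∉ S.2 then uS (S.1, insert (j + 1) (S.2.erase j)) else 0) +
  (if j ∈ S.1 ∧ j + 1 ∉ S.1 then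
      vv ^ ((if j ∈ S.2 then (1 : ℤ) else 0) - (if j + 1 ∈ S.2 then (1 : ℤ) else 0)) •
        uS (insert (j + 1) (S.1.erase j), S.2)
    else 0)

/-- The Chevalley generator `f_j` as a linear operator on `F`. -/
noncomputable def fLin (j : ℤ) : FF →ₗ[RatFunc ℚ] FF :=
  Finsupp.lsum (RatFunc ℚ) fun S => LinearMap.toSpanSingleton (RatFunc ℚ) FF (fAct j S)

/-- Divided powers: `f_j^{(1)} = f_j`, `f_j^{(2)} = f_j² / (v + v⁻¹)`. -/
noncomputable def fDiv (j : ℤ) (m : ℕ) : FF →ₗ[RatFunc ℚ] FF :=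
  if m = 2 then (vv + vv⁻¹)⁻¹ • (fLin j ∘ₗ fLin j) else fLin j

/-- `b_S = Σ_{Σ ∈ C(S)} v^{n(Σ)} u_Σ`, written as a sum over the subsets `T` of the
set of pairs of `S` (with `n(Σ) = |T|`). -/
noncomputable def bS (β γ : Finset ℤ) : FF :=
  ∑ T ∈ (pairsS β γ).powerset, vv ^ T.card • uS (swapSymbol β γ T)

/-- `ι` is an involution of the finite set `Z`. -/
def IsInvolutionOn (Z : Finset ℤ) (ι : ℤ → ℤ) : Prop :=
  (∀ z ∈ Z, ι z ∈ Z) ∧ ∀ z ∈ Z, ι (ι z) = z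

/-- `z < z'` are consecutive elements of `Z`. -/
def ConsecutiveIn (Z : Finset ℤ) (z z' : ℤ) : Prop :=
  z ∈ Z ∧ z' ∈ Z ∧ z < z' ∧ ∀ x ∈ Z, ¬(z < x ∧ x < z')

/-- `r`-admissible involutions of a finite set `Z` of integers: `ι` is an involution of
`Z` with exactly `r` fixed points, and either `|Z| = r`, or there are two consecutive
elements `z < z'` of `Z` with `ι z = z'` whose removal again yields an `r`-admissible
involution. -/
inductive IsAdmissible (r : ℕ) : Finset ℤ → (ℤ → ℤ) → Prop
  | base (Z : Finset ℤ) (ι : ℤ → ℤ) (hinv : IsInvolutionOn Z ι)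
      (hfix : (Z.filter fun z => ι z = z).card = r) (hcard : Z.card = r) :
      IsAdmissible r Z ι
  | step (Z : Finset ℤ) (ι : ℤ → ℤ) (z z' : ℤ) (hinv : IsInvolutionOn Z ι)
      (hfix : (Z.filter fun w => ι w = w).card = r)
      (hcons : ConsecutiveIn Z z z') (hzz : ι z = z')
      (hrec : IsAdmissible r (Z \ {z, z'}) ι) :
      IsAdmissible r Z ι

/-- `c_j(S)`: number of occurrences of `j` among the entries of the symbol `(β,γ)`. -/
def contentS (β γ : Finset ℤ) (j : ℤ) : ℕ :=
  (if j ∈ β then 1 else 0) + (if j ∈ γ then 1 else 0)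

section Aux
variable (β γ : Finset ℤ)

lemma psiAcc_fst_succ (l : ℕ) :
    (psiAcc β γ (l+1)).1 = (psiAcc β γ l).1 ∪ gammaL β γ (l+1) := rfl

lemma psiAcc_snd_succ (l : ℕ) :
    (psiAcc β γ (l+1)).2 =
      (psiAcc β γ l).2 ∪ (gammaL β γ (l+1)).image (fun j => j - ((l:ℤ)+1)) := rfl

lemma gammaL_subset_gamma (l : ℕ) : gammaL β γ l ⊆ γ := by
  cases l with
  | zero => exact Finset.inter_subset_left
  | succ l => exact (Finset.filter_subset _ _).trans (Finset.sdiff_subset)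

lemma psiAcc_fst_subset_gamma (l : ℕ) : (psiAcc β γ l).1 ⊆ γ := by
  induction l with
  | zero => exact Finset.inter_subset_left
  | succ l ih =>
      rw [psiAcc_fst_succ]
      exact Finset.union_subset ih (gammaL_subset_gamma β γ _)

lemma gammaL_disjoint_fst (l : ℕ) :
    Disjoint (gammaL β γ (l+1)) (psiAcc β γ l).1 := by
  rw [Finset.disjoint_left]
  intro a ha
  have := (Finset.mem_sdiff.mp (Finset.mem_filter.mp ha).1).2
  exact this

lemma mem_psiAcc_fst_iff (l : ℕ) (j : ℤ) :
    j ∈ (psiAcc β γ l).1 ↔ ∃ i ≤ l, j ∈ gammaL β γ i := by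
  induction l with
  | zero =>
      constructor
      · intro h; exact ⟨0, le_refl _, h⟩
      · rintro ⟨i, hi, h⟩; rw [Nat.le_zero.mp hi] at h; exact h
  | succ l ih =>
      rw [psiAcc_fst_succ, Finset.mem_union, ih]
      constructor
      · rintro (⟨i, hi, h⟩ | h)
        · exact ⟨i, hi.trans (Nat.le_succ l), h⟩
        · exact ⟨l+1, le_refl _, h⟩
      · rintro ⟨i, hi, h⟩
        rcases Nat.lt_succ_iff_lt_or_eq.mp (Nat.lt_succ_of_le hi) with h' | rfl
        · exact Or.inl ⟨i, Nat.lt_succ_iff.mp h', h⟩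
        · exact Or.inr h

lemma gammaL_subset_fst (l : ℕ) : gammaL β γ l ⊆ (psiAcc β γ l).1 := by
  intro j hj; exact (mem_psiAcc_fst_iff β γ l j).mpr ⟨l, le_refl _, hj⟩

lemma gammaL_disjoint (l m : ℕ) (h : l < m) :
    Disjoint (gammaL β γ l) (gammaL β γ m) := by
  obtain ⟨m', rfl⟩ : ∃ m', m = m' + 1 := ⟨m - 1, by omega⟩
  have h1 : gammaL β γ l ⊆ (psiAcc β γ m').1 := by
    intro j hj
    exact (mem_psiAcc_fst_iff β γ m' j).mpr ⟨l, by omega, hj⟩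
  exact ((gammaL_disjoint_fst β γ m').mono_right h1).symm

lemma psiS_eq_of_mem (l : ℕ) (j : ℤ) (hj : j ∈ gammaL β γ l) :
    psiS β γ j = j - (l : ℤ) := by
  classical
  have h : ∃ i, j ∈ gammaL β γ i := ⟨l, hj⟩
  rw [psiS, dif_pos h]
  congr 1
  have hfind := Nat.find_spec h
  by_contra hne
  have : Nat.find h ≠ l := by simpa using hne
  rcases Nat.lt_or_ge (Nat.find h) l with h' | h'
  · exact (Finset.disjoint_left.mp (gammaL_disjoint β γ _ _ h') hfind) hj
  · exact (Finset.disjoint_left.mp (gammaL_disjoint β γ _ _ (lt_of_le_of_ne h' (Ne.symm this)))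
      hj) hfind

end Aux
section Aux2
variable (β γ : Finset ℤ)

lemma psiS_mem_beta (l : ℕ) (j : ℤ) (hj : j ∈ gammaL β γ l) : psiS β γ j ∈ β := by
  rw [psiS_eq_of_mem β γ l j hj]
  cases l with
  | zero => simpa using (Finset.mem_inter.mp hj).2
  | succ l =>
      have := (Finset.mem_filter.mp hj).2
      have := Finset.mem_sdiff.mp this
      push_cast
      exact this.1

lemma psiS_le_self (l : ℕ) (j : ℤ) (hj : j ∈ gammaL β γ l) : psiS β γ j ≤ j := by
  rw [psiS_eq_of_mem β γ l j hj]; omega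

lemma psiAcc_snd_eq_image (l : ℕ) :
    (psiAcc β γ l).2 = (psiAcc β γ l).1.image (psiS β γ) := by
  induction l with
  | zero =>
      show γ ∩ β = (γ ∩ β).image (psiS β γ)
      rw [Finset.image_congr (g := id), Finset.image_id]
      intro j hj
      have : psiS β γ j = j - ((0:ℕ) : ℤ) := psiS_eq_of_mem β γ 0 j hj
      simpa using this
  | succ l ih =>
      rw [psiAcc_snd_succ, psiAcc_fst_succ, Finset.image_union, ih]
      congr 1
      apply Finset.image_congr
      intro j hj
      exact (psiS_eq_of_mem β γ (l+1) j hj).symm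

lemma injOn_psiAcc_fst (l : ℕ) :
    Set.InjOn (psiS β γ) ((psiAcc β γ l).1 : Set ℤ) := by
  induction l with
  | zero =>
      intro a ha b hb hab
      have ha' : psiS β γ a = a - ((0:ℕ):ℤ) := psiS_eq_of_mem β γ 0 a ha
      have hb' : psiS β γ b = b - ((0:ℕ):ℤ) := psiS_eq_of_mem β γ 0 b hb
      omega
  | succ l ih =>
      intro a ha b hb hab
      rw [psiAcc_fst_succ] at ha hb
      simp only [Finset.coe_union, Set.mem_union, Finset.mem_coe] at ha hb
      have hkey : ∀ x, x ∈ gammaL β γ (l+1) → psiS β γ x ∉ (psiAcc β γ l).2 := by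
        intro x hx
        rw [psiS_eq_of_mem β γ (l+1) x hx]
        have := Finset.mem_sdiff.mp (Finset.mem_filter.mp hx).2
        push_cast
        exact this.2
      have hmem : ∀ x, x ∈ (psiAcc β γ l).1 → psiS β γ x ∈ (psiAcc β γ l).2 := by
        intro x hx
        rw [psiAcc_snd_eq_image]
        exact Finset.mem_image_of_mem _ hx
      rcases ha with ha | ha <;> rcases hb with hb | hb
      · exact ih ha hb hab
      · exact absurd (hab ▸ hmem a ha) (hkey b hb)
      · exact absurd (hab ▸ hmem b hb) (hab ▸ hkey a ha)
      · have ha' := psiS_eq_of_mem β γ (l+1) a ha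
        have hb' := psiS_eq_of_mem β γ (l+1) b hb
        omega

/-- Lemma A: if `j ∈ γ` is unmatched after stage `l`, every `u ∈ β` with
`j - l ≤ u ≤ j` is already used. -/
lemma unmatched_used (l : ℕ) (j : ℤ) (hjγ : j ∈ γ) (hj : j ∉ (psiAcc β γ l).1)
    (u : ℤ) (hu : u ∈ β) (h1 : j - (l:ℤ) ≤ u) (h2 : u ≤ j) :
    u ∈ (psiAcc β γ l).2 := by
  induction l with
  | zero =>
      exfalso
      have : u = j := by push_cast at h1; omega
      exact hj (Finset.mem_inter.mpr ⟨hjγ, this ▸ hu⟩)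
  | succ l ih =>
      rw [psiAcc_fst_succ, Finset.mem_union, not_or] at hj
      rw [psiAcc_snd_succ, Finset.mem_union]
      rcases le_or_gt (j - (l:ℤ)) u with h' | h'
      · exact Or.inl (ih hj.1 h')
      · have hu_eq : u = j - ((l:ℤ)+1) := by push_cast at h1; omega
        left
        by_contra hnot
        apply hj.2
        rw [gammaL]
        refine Finset.mem_filter.mpr ⟨Finset.mem_sdiff.mpr ⟨hjγ, hj.1⟩, ?_⟩
        rw [← hu_eq]
        exact Finset.mem_sdiff.mpr ⟨hu, hnot⟩

/-- property (b5): for matched `j`, all of `β ∩ [ψ j, j]` is used. -/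
lemma matched_interval_used (l : ℕ) (j : ℤ) (hj : j ∈ (psiAcc β γ l).1)
    (u : ℤ) (hu : u ∈ β) (h1 : psiS β γ j ≤ u) (h2 : u ≤ j) :
    u ∈ (psiAcc β γ l).2 := by
  induction l with
  | zero =>
      have := psiS_eq_of_mem β γ 0 j hj
      have huj : u = j := by omega
      exact huj ▸ hj
  | succ l ih =>
      rw [psiAcc_fst_succ, Finset.mem_union] at hj
      rw [psiAcc_snd_succ, Finset.mem_union]
      rcases hj with hj | hj
      · exact Or.inl (ih hj)
      · have hψ := psiS_eq_of_mem β γ (l+1) j hj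
        rcases eq_or_lt_of_le h1 with h' | h'
        · right
          rw [← h', hψ]
          push_cast
          exact Finset.mem_image_of_mem _ hj
        · left
          have hjmem := Finset.mem_sdiff.mp (Finset.mem_filter.mp hj).2
          have hjnm : j ∉ (psiAcc β γ l).1 :=
            (Finset.mem_sdiff.mp (Finset.mem_filter.mp hj).1).2
          exact unmatched_used β γ l j (gammaL_subset_gamma β γ _ hj) hjnm u hu
            (by omega) h2

end Aux2
section Aux3

lemma aux_count_ge (s : Finset ℤ) (x : ℤ) (i : ℕ) (hi : i < s.card)
    (h : (s.sort (·≤·))[i]! ≤ x) : i + 1 ≤ (s.filter (· ≤ x)).card := by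
  classical
  set L := s.sort (·≤·) with hL
  have hlen : L.length = s.card := Finset.length_sort _
  have hsm : StrictMono L.get := (Finset.sortedLT_sort s).strictMono_get
  have hi' : i < L.length := by omega
  rw [getElem!_pos L i hi'] at h
  rw [← Finset.card_range (i+1)]
  apply Finset.card_le_card_of_injOn (fun m => L[m]!)
  · intro m hm
    rw [Finset.mem_coe, Finset.mem_range] at hm
    have hm' : m < L.length := by omega
    simp only [getElem!_pos L m hm']
    refine Finset.mem_filter.mpr ⟨(Finset.mem_sort _).mp (List.getElem_mem hm'), ?_⟩
    have hle : L.get ⟨m, hm'⟩ ≤ L.get ⟨i, hi'⟩ := hsm.monotone (by simp [Fin.mk_le_mk]; omega)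
    simp only [List.get_eq_getElem] at hle
    exact le_trans hle h
  · intro a ha b hb hab
    simp only [Finset.coe_range, Set.mem_Iio] at ha hb
    have ha' : a < L.length := by omega
    have hb' : b < L.length := by omega
    simp only [getElem!_pos L a ha', getElem!_pos L b hb'] at hab
    have : L.get ⟨a, ha'⟩ = L.get ⟨b, hb'⟩ := by simpa [List.get_eq_getElem] using hab
    have := hsm.injective this
    simpa [Fin.mk.injEq] using this

lemma aux_get_le (s : Finset ℤ) (x : ℤ) (ht : 0 < (s.filter (· ≤ x)).card) :
    (s.sort (·≤·))[(s.filter (· ≤ x)).card - 1]! ≤ x := by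
  classical
  by_contra hgt
  push_neg at hgt
  set t := (s.filter (· ≤ x)).card with hT
  set L := s.sort (·≤·) with hL
  have hlen : L.length = s.card := Finset.length_sort _
  have htle : t ≤ s.card := Finset.card_filter_le _ _
  have hsm : StrictMono L.get := (Finset.sortedLT_sort s).strictMono_get
  have ht1 : t - 1 < L.length := by omega
  rw [getElem!_pos L (t-1) ht1] at hgt
  have hbig : (Finset.Ico (t-1) s.card).card ≤ (s.filter (fun y => ¬ y ≤ x)).card := by
    apply Finset.card_le_card_of_injOn (fun m => L[m]!)
    · intro m hm
      rw [Finset.mem_coe, Finset.mem_Ico] at hm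
      have hm' : m < L.length := by omega
      simp only [getElem!_pos L m hm']
      refine Finset.mem_filter.mpr ⟨(Finset.mem_sort _).mp (List.getElem_mem hm'), ?_⟩
      have hle : L.get ⟨t-1, ht1⟩ ≤ L.get ⟨m, hm'⟩ :=
        hsm.monotone (by simp [Fin.mk_le_mk]; omega)
      simp only [List.get_eq_getElem] at hle
      omega
    · intro a ha b hb hab
      simp only [Finset.coe_Ico, Set.mem_Ico] at ha hb
      have ha' : a < L.length := by omega
      have hb' : b < L.length := by omega
      simp only [getElem!_pos L a ha', getElem!_pos L b hb'] at hab
      have : L.get ⟨a, ha'⟩ = L.get ⟨b, hb'⟩ := by simpa [List.get_eq_getElem] using hab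
      have := hsm.injective this
      simpa [Fin.mk.injEq] using this
  have hsum := Finset.card_filter_add_card_filter_not (s := s) (p := fun y => y ≤ x)
  rw [Nat.card_Ico] at hbig
  omega

lemma prefix_count (β γ : Finset ℤ) (hcard : γ.card ≤ β.card) (hstd : IsStandard β γ)
    (x : ℤ) : (γ.filter (· ≤ x)).card ≤ (β.filter (· ≤ x)).card := by
  set t := (γ.filter (· ≤ x)).card with hT
  rcases Nat.eq_zero_or_pos t with h0 | hpos
  · omega
  · have htγ : t ≤ γ.card := Finset.card_filter_le _ _
    have h1 : (γ.sort (·≤·))[t-1]! ≤ x := aux_get_le γ x hpos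
    have h2 : (β.sort (·≤·))[t-1]! ≤ (γ.sort (·≤·))[t-1]! := hstd (t-1) (by omega)
    have h3 := aux_count_ge β x (t-1) (by omega) (le_trans h2 h1)
    omega

end Aux3
section Aux4
variable (β γ : Finset ℤ) (n : ℕ)

/-- Key counting step: if all of `β ∩ (-∞, x]` is used but some `j0 ≤ x` in `γ` is
unmatched, there is a matched `x' > x` with all of `β ∩ (-∞, x']` used. -/
lemma key_step (hcard : γ.card ≤ β.card) (hstd : IsStandard β γ)
    (x : ℤ) (hβx : ∀ u ∈ β, u ≤ x → u ∈ (psiAcc β γ n).2)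
    (j0 : ℤ) (hj0γ : j0 ∈ γ) (hj0 : j0 ∉ (psiAcc β γ n).1) (hj0x : j0 ≤ x) :
    ∃ x' ∈ (psiAcc β γ n).1, x < x' ∧ ∀ u ∈ β, u ≤ x' → u ∈ (psiAcc β γ n).2 := by
  classical
  set M := (psiAcc β γ n).1 with hM
  set A := M.filter (fun j => psiS β γ j ≤ x) with hA
  by_cases hex : ∃ x' ∈ A, x < x'
  · obtain ⟨x', hx'A, hxx'⟩ := hex
    obtain ⟨hx'M, hψx'⟩ := Finset.mem_filter.mp hx'A
    refine ⟨x', hx'M, hxx', ?_⟩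
    intro u hu hux'
    rcases le_or_gt u x with h | h
    · exact hβx u hu h
    · exact matched_interval_used β γ n x' hx'M u hu (by omega) hux'
  · push_neg at hex
    exfalso
    have hsub : insert j0 A ⊆ γ.filter (· ≤ x) := by
      intro a ha
      rcases Finset.mem_insert.mp ha with rfl | ha
      · exact Finset.mem_filter.mpr ⟨hj0γ, hj0x⟩
      · obtain ⟨haM, _⟩ := Finset.mem_filter.mp ha
        exact Finset.mem_filter.mpr
          ⟨psiAcc_fst_subset_gamma β γ n haM, hex a ha⟩
    have hj0A : j0 ∉ A := fun h => hj0 (Finset.mem_filter.mp h).1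
    have hc1 : A.card + 1 ≤ (γ.filter (· ≤ x)).card := by
      have := Finset.card_le_card hsub
      rwa [Finset.card_insert_of_notMem hj0A] at this
    have hBA : β.filter (· ≤ x) ⊆ A.image (psiS β γ) := by
      intro u hu
      obtain ⟨huβ, hux⟩ := Finset.mem_filter.mp hu
      have := hβx u huβ hux
      rw [psiAcc_snd_eq_image] at this
      obtain ⟨j, hjM, hju⟩ := Finset.mem_image.mp this
      exact Finset.mem_image.mpr ⟨j, Finset.mem_filter.mpr ⟨hjM, by omega⟩, hju⟩
    have hc2 : (A.image (psiS β γ)).card = A.card :=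
      Finset.card_image_of_injOn
        ((injOn_psiAcc_fst β γ n).mono (by
          intro a ha
          exact (Finset.mem_filter.mp ha).1))
    have hc3 := Finset.card_le_card hBA
    have hc4 := prefix_count β γ hcard hstd x
    omega

lemma no_unmatched (hcard : γ.card ≤ β.card) (hstd : IsStandard β γ)
    (hγI : γ ⊆ Finset.Icc 1 ((n : ℤ) + 1)) :
    ∀ d : ℕ, ∀ x, x ∈ γ → ((n:ℤ) + 1 - x).toNat ≤ d →
      (∀ u ∈ β, u ≤ x → u ∈ (psiAcc β γ n).2) →
      (∃ j0, j0 ∈ γ ∧ j0 ∉ (psiAcc β γ n).1 ∧ j0 ≤ x) → False := by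
  intro d
  induction d with
  | zero =>
      intro x hx hxd hβx ⟨j0, hj0γ, hj0, hj0x⟩
      obtain ⟨x', hx'M, hxx', _⟩ := key_step β γ n hcard hstd x hβx j0 hj0γ hj0 hj0x
      have hx'γ := psiAcc_fst_subset_gamma β γ n hx'M
      have := Finset.mem_Icc.mp (hγI hx'γ)
      omega
  | succ d ih =>
      intro x hx hxd hβx ⟨j0, hj0γ, hj0, hj0x⟩
      obtain ⟨x', hx'M, hxx', hβx'⟩ := key_step β γ n hcard hstd x hβx j0 hj0γ hj0 hj0x
      have hx'γ := psiAcc_fst_subset_gamma β γ n hx'M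
      exact ih x' hx'γ (by omega) hβx' ⟨j0, hj0γ, hj0, by omega⟩

lemma matched_total (hcard : γ.card ≤ β.card) (hstd : IsStandard β γ)
    (hβI : β ⊆ Finset.Icc 1 ((n : ℤ) + 1)) (hγI : γ ⊆ Finset.Icc 1 ((n : ℤ) + 1)) :
    γ ⊆ (psiAcc β γ n).1 := by
  intro j hj
  by_contra hnm
  have hjI := Finset.mem_Icc.mp (hγI hj)
  apply no_unmatched β γ n hcard hstd hγI (((n:ℤ) + 1 - j).toNat) j hj le_rfl
  · intro u hu hux
    have huI := Finset.mem_Icc.mp (hβI hu)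
    exact unmatched_used β γ n j hj hnm u hu (by omega) hux
  · exact ⟨j, hj, hnm, le_refl j⟩

end Aux4
/-- for a standard symbol the recursive construction of `ψ` succeeds:
the `γ^l` are pairwise disjoint with union `γ`, the resulting map `ψ` (equal to
`j - l` on `γ^l`) is a well-defined injection of `γ` into `β`, and `ψ(j) ≤ j`. -/
theorem statement0 (n k r : ℕ) (hn : 2 ≤ n) (hk : 1 ≤ k) (hkr : k + r ≤ n)
    (β γ : Finset ℤ) (hS : IsSymbol n k r β γ) (hstd : IsStandard β γ) :
    (∀ l m : ℕ, l ≠ m → Disjoint (gammaL β γ l) (gammaL β γ m)) ∧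
    ((γ : Set ℤ) = ⋃ l : ℕ, (gammaL β γ l : Set ℤ)) ∧
    (∀ l : ℕ, ∀ j ∈ gammaL β γ l, psiS β γ j = j - (l : ℤ)) ∧
    Set.InjOn (psiS β γ) (γ : Set ℤ) ∧
    (∀ j ∈ γ, psiS β γ j ∈ β ∧ psiS β γ j ≤ j) := by
  obtain ⟨hβI, hγI, hβc, hγc⟩ := hS
  have hcard : γ.card ≤ β.card := by omega
  have htotal : γ ⊆ (psiAcc β γ n).1 := matched_total β γ n hcard hstd hβI hγI
  refine ⟨?_, ?_, ?_, ?_, ?_⟩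
  · intro l m hlm
    rcases lt_or_gt_of_ne hlm with h | h
    · exact gammaL_disjoint β γ l m h
    · exact (gammaL_disjoint β γ m l h).symm
  · ext x
    simp only [Set.mem_iUnion, Finset.mem_coe]
    constructor
    · intro hx
      obtain ⟨i, _, hi⟩ := (mem_psiAcc_fst_iff β γ n x).mp (htotal hx)
      exact ⟨i, hi⟩
    · rintro ⟨i, hi⟩
      exact gammaL_subset_gamma β γ i hi
  · exact fun l j hj => psiS_eq_of_mem β γ l j hj
  · exact (injOn_psiAcc_fst β γ n).mono (by exact_mod_cast htotal)
  · intro j hj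
    obtain ⟨i, _, hi⟩ := (mem_psiAcc_fst_iff β γ n j).mp (htotal hj)
    exact ⟨psiS_mem_beta β γ i j hi, psiS_le_self β γ i j hi⟩

end LM2003
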